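/- arXiv:nlin/0412018 — 3 statements merged into one kernel-verified Lean document; each statement's English description precedes it below -/
import Mathlib

section
/- For every integer n ≥ 2 and every i ∈ {0,1,...,n}, the function E_{i,1} is given explicitly by E_{i,1}(q,p) = (1/2) Σ_{k=0}^{n−i−1} q^k Σ_{j=k+1}^{n−i} p_j p_{n−i+k−j+1} − (1/2) Σ_{k=1}^{i} q^{n−i+k} Σ_{j=1}^{k} p_{n−i+j} p_{n−i+k−j+1}, where q^0 := 1 and q^m := 0 for m > n. -/
open Matrix

noncomputable section

/-- Phase space ℝ^{2n}: pairs (q, p). -/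
abbrev Phase (n : ℕ) := (Fin n → ℝ) × (Fin n → ℝ)

/-- Extended coordinates: `qext n q m` is `q^m` (1-based), with `q^0 := 1`
and `q^m := 0` for `m < 0` or `m > n`. -/
def qext (n : ℕ) (q : Fin n → ℝ) (m : ℤ) : ℝ :=
  if h : 1 ≤ m ∧ m ≤ (n : ℤ) then q ⟨m.toNat - 1, by omega⟩
  else if m = 0 then 1 else 0

/-- The matrix `L(q)`: first column `-q^j`, superdiagonal `1`, all other entries `0`. -/
def Lmat (n : ℕ) (q : Fin n → ℝ) : Matrix (Fin n) (Fin n) ℝ :=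
  Matrix.of fun j k => if (k : ℕ) = 0 then -q j else if (k : ℕ) = (j : ℕ) + 1 then 1 else 0

/-- The contravariant metric `G(q)` with entries `G^{jk} = q^{j+k-n-1}` (1-based indices). -/
def Gmat (n : ℕ) (q : Fin n → ℝ) : Matrix (Fin n) (Fin n) ℝ :=
  Matrix.of fun j k => qext n q ((j : ℤ) + (k : ℤ) + 1 - (n : ℤ))

/-- The Killing tensors: `K_r = Σ_{k=0}^{r-1} q^k L^{r-1-k}` (so `K_1 = I`). -/
def Kmat (n : ℕ) (q : Fin n → ℝ) (r : ℕ) : Matrix (Fin n) (Fin n) ℝ :=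
  ∑ k ∈ Finset.range r, qext n q (k : ℤ) • (Lmat n q) ^ (r - 1 - k)

/-- `E_{i,r}(q,p) = (1/2) Σ_{l,m} (K_r L^i G)^{lm} p_l p_m`. -/
def Efun (n i r : ℕ) : Phase n → ℝ := fun x =>
  (1 / 2) * ∑ l : Fin n, ∑ m : Fin n,
    (Kmat n x.1 r * (Lmat n x.1) ^ i * Gmat n x.1) l m * x.2 l * x.2 m

/-- Canonical Poisson bracket on `ℝ^{2n}`. -/
def pb (n : ℕ) (f g : Phase n → ℝ) : Phase n → ℝ := fun x =>
  ∑ i : Fin n,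
    (fderiv ℝ f x (Pi.single i 1, 0) * fderiv ℝ g x (0, Pi.single i 1)
      - fderiv ℝ f x (0, Pi.single i 1) * fderiv ℝ g x (Pi.single i 1, 0))

/-- Extended momenta: `pe n p j` is `p_j` (1-based), zero out of range. -/
def pe (n : ℕ) (p : Fin n → ℝ) (j : ℕ) : ℝ :=
  if h : 1 ≤ j ∧ j ≤ n then p ⟨j - 1, by omega⟩ else 0

-- auxiliary

variable {n i : ℕ} {q p : Fin n → ℝ}

lemma qext_of_neg {m : ℤ} (h : m < 0) : qext n q m = 0 := by
  rw [qext, dif_neg (by omega), if_neg (by omega)]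

lemma qext_zero : qext n q 0 = 1 := by
  rw [qext, dif_neg (by omega), if_pos rfl]

lemma qext_of_gt {m : ℤ} (h : (n : ℤ) < m) : qext n q m = 0 := by
  rw [qext, dif_neg (by omega), if_neg (by omega)]

lemma qext_fin (l : Fin n) : qext n q ((l : ℤ) + 1) = q l := by
  have hl := l.isLt
  rw [qext, dif_pos (by omega)]
  congr 1

lemma pe_fin (l : Fin n) : pe n p ((l : ℕ) + 1) = p l := by
  have hl := l.isLt
  rw [pe, dif_pos (by omega)]
  congr 1

lemma Kmat_one : Kmat n q 1 = 1 := by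
  simp [Kmat, qext_zero]

/-- entries of `L^i G` -/
def Mc (n i : ℕ) (q : Fin n → ℝ) (a b : ℕ) : ℝ :=
  if a + i < n ∧ b + i < n then qext n q ((a : ℤ) + b + i + 1 - n)
  else if n ≤ a + i ∧ n ≤ b + i then -qext n q ((a : ℤ) + b + i + 1 - n)
  else 0

lemma step_entry (hi : i < n) (a b : ℕ) (ha : a < n) (hb : b < n) :
    -qext n q ((a : ℤ) + 1) * Mc n i q 0 b
      + (if a + 1 < n then Mc n i q (a + 1) b else 0) = Mc n (i + 1) q a b := by
  have hMc0 : Mc n i q 0 b = if b + i + 1 = n then 1 else 0 := by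
    rw [Mc]
    by_cases h1 : b + i < n
    · rw [if_pos ⟨by omega, h1⟩]
      by_cases h2 : b + i + 1 = n
      · rw [if_pos h2]
        have : ((0:ℕ) : ℤ) + b + i + 1 - n = 0 := by push_cast; omega
        rw [this, qext_zero]
      · rw [if_neg h2, qext_of_neg (by push_cast; omega)]
    · rw [if_neg (by omega), if_neg (by omega), if_neg (by omega)]
  rw [hMc0]
  by_cases h2 : b + i + 1 = n
  · rw [if_pos h2]
    by_cases h3 : a + i + 1 < n
    · have ha1 : a + 1 < n := by omega
      rw [if_pos ha1, Mc, if_pos ⟨by omega, by omega⟩, Mc, if_neg (by omega),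
        if_neg (by omega)]
      have e : ((a + 1 : ℕ) : ℤ) + b + i + 1 - n = (a : ℤ) + 1 := by push_cast; omega
      rw [e]; ring
    · have hR : Mc n (i + 1) q a b = -qext n q ((a : ℤ) + 1) := by
        rw [Mc, if_neg (by omega), if_pos ⟨by omega, by omega⟩]
        have e : (a : ℤ) + b + (i + 1 : ℕ) + 1 - n = (a : ℤ) + 1 := by push_cast; omega
        rw [e]
      rw [hR]
      by_cases ha1 : a + 1 < n
      · rw [if_pos ha1, Mc, if_neg (by omega), if_neg (by omega)]; ring
      · rw [if_neg ha1]; ring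
  · rw [if_neg h2]
    by_cases ha1 : a + 1 < n
    · rw [if_pos ha1]
      by_cases hA : a + i + 1 < n
      · by_cases hB : b + i + 1 < n
        · rw [Mc, if_pos ⟨by omega, by omega⟩, Mc, if_pos ⟨by omega, by omega⟩]
          have e : ((a + 1 : ℕ) : ℤ) + b + i + 1 - n = (a : ℤ) + b + (i + 1 : ℕ) + 1 - n := by
            push_cast; ring
          rw [e]; ring
        · rw [Mc, if_neg (by omega), if_neg (by omega), Mc, if_neg (by omega),
            if_neg (by omega)]; ring
      · by_cases hB : b + i + 1 < n
        · rw [Mc, if_neg (by omega), if_neg (by omega), Mc, if_neg (by omega),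
            if_neg (by omega)]; ring
        · rw [Mc, if_neg (by omega), if_pos ⟨by omega, by omega⟩, Mc, if_neg (by omega),
            if_pos ⟨by omega, by omega⟩]
          have e : ((a + 1 : ℕ) : ℤ) + b + i + 1 - n = (a : ℤ) + b + (i + 1 : ℕ) + 1 - n := by
            push_cast; ring
          rw [e]; ring
    · rw [if_neg ha1]
      by_cases hB : b + i + 1 < n
      · rw [Mc, if_neg (by omega), if_neg (by omega)]; ring
      · have e : (a : ℤ) + b + (i + 1 : ℕ) + 1 - n = (b : ℤ) + i + 1 := by push_cast; omega
        have hz : qext n q ((b : ℤ) + i + 1) = 0 := qext_of_gt (by push_cast; omega)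
        rw [Mc, if_neg (by omega), if_pos ⟨by omega, by omega⟩, e, hz]; ring

def Mmat (n : ℕ) (q : Fin n → ℝ) (i : ℕ) : Matrix (Fin n) (Fin n) ℝ :=
  Matrix.of fun l m => Mc n i q l m

lemma Lmat_mul_Mmat (hi : i < n) : Lmat n q * Mmat n q i = Mmat n q (i + 1) := by
  ext l m
  rw [Matrix.mul_apply]
  have hterm : ∀ k : Fin n, Lmat n q l k * Mmat n q i k m =
      (if (k : ℕ) = 0 then -q l * Mc n i q 0 (m : ℕ) else 0)
      + (if (k : ℕ) = (l : ℕ) + 1 then Mc n i q ((l : ℕ) + 1) (m : ℕ) else 0) := by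
    intro k
    simp only [Lmat, Mmat, Matrix.of_apply]
    by_cases h1 : (k : ℕ) = 0
    · simp [h1]
    · by_cases h2 : (k : ℕ) = (l : ℕ) + 1
      · simp [h1, h2]
      · simp [h1, h2]
  rw [Finset.sum_congr rfl fun k _ => hterm k, Finset.sum_add_distrib]
  rw [Fin.sum_univ_eq_sum_range (fun a => if a = 0 then -q l * Mc n i q 0 (m : ℕ) else 0) n]
  rw [Fin.sum_univ_eq_sum_range
    (fun a => if a = (l : ℕ) + 1 then Mc n i q ((l : ℕ) + 1) (m : ℕ) else 0) n]
  rw [Finset.sum_ite_eq' (Finset.range n) 0 (fun _ => -q l * Mc n i q 0 (m : ℕ)),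
    Finset.sum_ite_eq' (Finset.range n) ((l : ℕ) + 1) (fun _ => Mc n i q ((l : ℕ) + 1) (m : ℕ))]
  rw [if_pos (Finset.mem_range.mpr (by omega))]
  simp only [Finset.mem_range]
  have hq : q l = qext n q ((l : ℤ) + 1) := (qext_fin l).symm
  rw [hq]
  simpa [Mmat] using step_entry (q := q) hi (l : ℕ) (m : ℕ) l.isLt m.isLt

lemma LpowG (hn : 1 ≤ n) : ∀ i, i ≤ n → Lmat n q ^ i * Gmat n q = Mmat n q i
  | 0, _ => by
    ext l m
    have hl := l.isLt
    have hm := m.isLt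
    rw [pow_zero, one_mul]
    simp only [Mmat, Gmat, Matrix.of_apply, Mc]
    rw [if_pos ⟨by omega, by omega⟩]
    norm_num
  | (i + 1), h => by
    rw [pow_succ', Matrix.mul_assoc, LpowG hn i (by omega), Lmat_mul_Mmat (by omega)]

lemma key_sum (hi : i ≤ n) :
    ∑ a ∈ Finset.range n, ∑ b ∈ Finset.range n,
        Mc n i q a b * pe n p (a + 1) * pe n p (b + 1)
      = (∑ k ∈ Finset.range (n - i), qext n q (k : ℤ) *
          ∑ j ∈ Finset.Icc (k + 1) (n - i), pe n p j * pe n p (n - i + k - j + 1))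
        - ∑ k ∈ Finset.Icc 1 i, qext n q ((n - i + k : ℕ) : ℤ) *
          ∑ j ∈ Finset.Icc 1 k, pe n p (n - i + j) * pe n p (n - i + k - j + 1) := by
  have h1 : ∀ g : ℕ → ℝ, ∑ a ∈ Finset.range n, g a
      = ∑ a ∈ Finset.range (n - i), g a + ∑ a ∈ Finset.Ico (n - i) n, g a := by
    intro g
    rw [Finset.range_eq_Ico, Finset.range_eq_Ico]
    exact (Finset.sum_Ico_consecutive g (m := 0) (n := n - i) (k := n) (by omega) (by omega)).symm
  have hmix1 : ∀ a ∈ Finset.range (n - i), ∀ b ∈ Finset.Ico (n - i) n,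
      Mc n i q a b * pe n p (a + 1) * pe n p (b + 1) = 0 := by
    intro a ha b hb
    simp only [Finset.mem_range] at ha
    simp only [Finset.mem_Ico] at hb
    rw [Mc, if_neg (by omega), if_neg (by omega)]
    ring
  have hmix2 : ∀ a ∈ Finset.Ico (n - i) n, ∀ b ∈ Finset.range (n - i),
      Mc n i q a b * pe n p (a + 1) * pe n p (b + 1) = 0 := by
    intro a ha b hb
    simp only [Finset.mem_range] at hb
    simp only [Finset.mem_Ico] at ha
    rw [Mc, if_neg (by omega), if_neg (by omega)]
    ring
  have hT1 : ∑ a ∈ Finset.range (n - i), ∑ b ∈ Finset.range (n - i),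
        Mc n i q a b * pe n p (a + 1) * pe n p (b + 1)
      = ∑ k ∈ Finset.range (n - i), qext n q (k : ℤ) *
          ∑ j ∈ Finset.Icc (k + 1) (n - i), pe n p j * pe n p (n - i + k - j + 1) := by
    simp only [Finset.mul_sum]
    rw [Finset.sum_sigma', Finset.sum_sigma']
    rw [← Finset.sum_filter_of_ne (p := fun x : (_ : ℕ) × ℕ => n ≤ x.1 + x.2 + i + 1) ?hne]
    case hne =>
      rintro ⟨a, b⟩ hx hne
      by_contra hc
      apply hne
      dsimp only
      rw [Mc]
      simp only [Finset.mem_sigma, Finset.mem_range] at hx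
      dsimp only at hc
      have hz : qext n q ((a : ℤ) + b + i + 1 - n) = 0 := qext_of_neg (by push_cast; omega)
      rw [if_pos ⟨by omega, by omega⟩, hz]
      ring
    refine Finset.sum_nbij' (fun x => ⟨x.1 + x.2 + i + 1 - n, x.1 + 1⟩)
      (fun x => ⟨x.2 - 1, n - i + x.1 - x.2⟩) ?_ ?_ ?_ ?_ ?_
    · rintro ⟨a, b⟩ h
      simp only [Finset.mem_filter, Finset.mem_sigma, Finset.mem_range, Finset.mem_Icc] at h
      dsimp only
      simp only [Finset.mem_filter, Finset.mem_sigma, Finset.mem_range, Finset.mem_Icc]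
      omega
    · rintro ⟨k, j⟩ h
      simp only [Finset.mem_filter, Finset.mem_sigma, Finset.mem_range, Finset.mem_Icc] at h
      dsimp only
      simp only [Finset.mem_filter, Finset.mem_sigma, Finset.mem_range, Finset.mem_Icc]
      omega
    · rintro ⟨a, b⟩ h
      simp only [Finset.mem_filter, Finset.mem_sigma, Finset.mem_range, Finset.mem_Icc] at h
      dsimp only
      simp only [Sigma.ext_iff, heq_eq_eq]
      omega
    · rintro ⟨k, j⟩ h
      simp only [Finset.mem_filter, Finset.mem_sigma, Finset.mem_range, Finset.mem_Icc] at h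
      dsimp only
      simp only [Sigma.ext_iff, heq_eq_eq]
      omega
    · rintro ⟨a, b⟩ h
      simp only [Finset.mem_filter, Finset.mem_sigma, Finset.mem_range, Finset.mem_Icc] at h
      dsimp only
      rw [Mc, if_pos ⟨by omega, by omega⟩]
      have e1 : (a : ℤ) + b + i + 1 - n = ((a + b + i + 1 - n : ℕ) : ℤ) := by omega
      have e2 : n - i + (a + b + i + 1 - n) - (a + 1) + 1 = b + 1 := by omega
      rw [e1, e2]
      ring
  have hT2 : ∑ a ∈ Finset.Ico (n - i) n, ∑ b ∈ Finset.Ico (n - i) n,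
        Mc n i q a b * pe n p (a + 1) * pe n p (b + 1)
      = -∑ k ∈ Finset.Icc 1 i, qext n q ((n - i + k : ℕ) : ℤ) *
          ∑ j ∈ Finset.Icc 1 k, pe n p (n - i + j) * pe n p (n - i + k - j + 1) := by
    simp only [Finset.mul_sum]
    rw [Finset.sum_sigma', Finset.sum_sigma', ← Finset.sum_neg_distrib]
    rw [← Finset.sum_filter_of_ne (p := fun x : (_ : ℕ) × ℕ => x.1 + x.2 + i + 1 ≤ 2 * n) ?hne]
    case hne =>
      rintro ⟨a, b⟩ hx hne
      by_contra hc
      apply hne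
      dsimp only
      rw [Mc]
      simp only [Finset.mem_sigma, Finset.mem_Ico] at hx
      dsimp only at hc
      have hz : qext n q ((a : ℤ) + b + i + 1 - n) = 0 := qext_of_gt (by push_cast; omega)
      rw [if_neg (by omega), if_pos ⟨by omega, by omega⟩, hz]
      ring
    refine Finset.sum_nbij' (fun x => ⟨x.1 + x.2 + 2 * i + 1 - 2 * n, x.1 + i + 1 - n⟩)
      (fun x => ⟨n - i + x.2 - 1, n - i + x.1 - x.2⟩) ?_ ?_ ?_ ?_ ?_
    · rintro ⟨a, b⟩ h
      simp only [Finset.mem_filter, Finset.mem_sigma, Finset.mem_Ico, Finset.mem_Icc] at h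
      dsimp only
      simp only [Finset.mem_filter, Finset.mem_sigma, Finset.mem_Ico, Finset.mem_Icc]
      omega
    · rintro ⟨k, j⟩ h
      simp only [Finset.mem_filter, Finset.mem_sigma, Finset.mem_Ico, Finset.mem_Icc] at h
      dsimp only
      simp only [Finset.mem_filter, Finset.mem_sigma, Finset.mem_Ico, Finset.mem_Icc]
      omega
    · rintro ⟨a, b⟩ h
      simp only [Finset.mem_filter, Finset.mem_sigma, Finset.mem_Ico, Finset.mem_Icc] at h
      dsimp only
      simp only [Sigma.ext_iff, heq_eq_eq]
      omega
    · rintro ⟨k, j⟩ h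
      simp only [Finset.mem_filter, Finset.mem_sigma, Finset.mem_Ico, Finset.mem_Icc] at h
      dsimp only
      simp only [Sigma.ext_iff, heq_eq_eq]
      omega
    · rintro ⟨a, b⟩ h
      simp only [Finset.mem_filter, Finset.mem_sigma, Finset.mem_Ico, Finset.mem_Icc] at h
      dsimp only
      rw [Mc, if_neg (by omega), if_pos ⟨by omega, by omega⟩]
      have e1 : (a : ℤ) + b + i + 1 - n = ((n - i + (a + b + 2 * i + 1 - 2 * n) : ℕ) : ℤ) := by
        omega
      have e2 : n - i + (a + i + 1 - n) = a + 1 := by omega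
      have e3 : n - i + (a + b + 2 * i + 1 - 2 * n) - (a + i + 1 - n) + 1 = b + 1 := by omega
      rw [e1, e2, e3]
      ring
  calc ∑ a ∈ Finset.range n, ∑ b ∈ Finset.range n,
        Mc n i q a b * pe n p (a + 1) * pe n p (b + 1)
      = ∑ a ∈ Finset.range (n - i), ∑ b ∈ Finset.range n,
          Mc n i q a b * pe n p (a + 1) * pe n p (b + 1)
        + ∑ a ∈ Finset.Ico (n - i) n, ∑ b ∈ Finset.range n,
          Mc n i q a b * pe n p (a + 1) * pe n p (b + 1) := h1 _
    _ = ∑ a ∈ Finset.range (n - i), ∑ b ∈ Finset.range (n - i),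
          Mc n i q a b * pe n p (a + 1) * pe n p (b + 1)
        + ∑ a ∈ Finset.Ico (n - i) n, ∑ b ∈ Finset.Ico (n - i) n,
          Mc n i q a b * pe n p (a + 1) * pe n p (b + 1) := by
        congr 1
        · refine Finset.sum_congr rfl fun a ha => ?_
          rw [h1 (fun b => Mc n i q a b * pe n p (a + 1) * pe n p (b + 1))]
          rw [Finset.sum_eq_zero (fun b hb => hmix1 a ha b hb), add_zero]
        · refine Finset.sum_congr rfl fun a ha => ?_
          rw [h1 (fun b => Mc n i q a b * pe n p (a + 1) * pe n p (b + 1))]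
          rw [Finset.sum_eq_zero (fun b hb => hmix2 a ha b hb), zero_add]
    _ = _ := by rw [hT1, hT2]; ring


/-- for `0 ≤ i ≤ n`, the explicit formula
`E_{i,1} = (1/2) Σ_{k=0}^{n−i−1} q^k Σ_{j=k+1}^{n−i} p_j p_{n−i+k−j+1}
 − (1/2) Σ_{k=1}^{i} q^{n−i+k} Σ_{j=1}^{k} p_{n−i+j} p_{n−i+k−j+1}`. -/
theorem Efun_i_one_explicit (n : ℕ) (hn : 2 ≤ n) (i : ℕ) (hi : i ≤ n) (x : Phase n) :
    Efun n i 1 x =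
      (1 / 2) * (∑ k ∈ Finset.range (n - i), qext n x.1 (k : ℤ) *
          ∑ j ∈ Finset.Icc (k + 1) (n - i), pe n x.2 j * pe n x.2 (n - i + k - j + 1))
      - (1 / 2) * (∑ k ∈ Finset.Icc 1 i, qext n x.1 ((n - i + k : ℕ) : ℤ) *
          ∑ j ∈ Finset.Icc 1 k, pe n x.2 (n - i + j) * pe n x.2 (n - i + k - j + 1)) := by
  have hp : ∀ l : Fin n, x.2 l = pe n x.2 ((l : ℕ) + 1) := fun l => (pe_fin l).symm
  simp only [Efun, Kmat_one, one_mul, LpowG (show 1 ≤ n by omega) i hi, Mmat,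
    Matrix.of_apply]
  simp only [hp]
  have hdouble : (∑ l : Fin n, ∑ m : Fin n,
        Mc n i x.1 ↑l ↑m * pe n x.2 ((l : ℕ) + 1) * pe n x.2 ((m : ℕ) + 1))
      = ∑ a ∈ Finset.range n, ∑ b ∈ Finset.range n,
        Mc n i x.1 a b * pe n x.2 (a + 1) * pe n x.2 (b + 1) := by
    rw [Fin.sum_univ_eq_sum_range
      (fun a => ∑ m : Fin n, Mc n i x.1 a ↑m * pe n x.2 (a + 1) * pe n x.2 ((m : ℕ) + 1)) n]
    exact Finset.sum_congr rfl fun a _ => Fin.sum_univ_eq_sum_range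
      (fun b => Mc n i x.1 a b * pe n x.2 (a + 1) * pe n x.2 (b + 1)) n
  rw [hdouble, key_sum hi]
  ring
end
end

section
/- For every integer n ≥ 2, the function E_{n+1,1} is given explicitly by E_{n+1,1}(q,p) = (1/2) Σ_{i,j=1}^{n} (q^i q^j − q^{i+j}) p_i p_j, where q^k := 0 for k > n. -/
open Matrix

noncomputable section

lemma qext_one (n : ℕ) (q : Fin n → ℝ) {a : ℤ} (h : a = 0) : qext n q a = 1 := by
  subst h; simp [qext]

lemma qext_eq_zero (n : ℕ) (q : Fin n → ℝ) {a : ℤ} (h : a < 0 ∨ (n:ℤ) < a) :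
    qext n q a = 0 := by
  rw [qext, dif_neg (by omega), if_neg (by omega)]

lemma qext_eq (n : ℕ) (q : Fin n → ℝ) {a : ℤ} (j : Fin n) (h : a = (j:ℤ) + 1) :
    qext n q a = q j := by
  subst h
  have hj := j.isLt
  rw [qext, dif_pos ⟨by omega, by omega⟩]
  congr 1

lemma mul_apply_L (n : ℕ) (q : Fin n → ℝ) (B : Matrix (Fin n) (Fin n) ℝ) (j m : Fin n) :
    (Lmat n q * B) j m = -q j * B ⟨0, j.pos⟩ m +
      (if h : (j:ℕ) + 1 < n then B ⟨(j:ℕ)+1, h⟩ m else 0) := by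
  classical
  rw [Matrix.mul_apply]
  by_cases h : (j:ℕ) + 1 < n
  · rw [dif_pos h]
    have key : ∀ k : Fin n, Lmat n q j k * B k m =
        (if k = ⟨0, j.pos⟩ then -q j * B ⟨0, j.pos⟩ m else 0) +
        (if k = ⟨(j:ℕ)+1, h⟩ then B ⟨(j:ℕ)+1, h⟩ m else 0) := by
      intro k
      rcases k with ⟨kv, hk⟩
      simp only [Lmat, Matrix.of_apply, Fin.mk.injEq]
      split_ifs <;> subst_vars <;> first | ring1 | (exfalso; omega)
    rw [Finset.sum_congr rfl (fun k _ => key k), Finset.sum_add_distrib,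
        Finset.sum_ite_eq', Finset.sum_ite_eq', if_pos (Finset.mem_univ _),
        if_pos (Finset.mem_univ _)]
  · rw [dif_neg h]
    have key : ∀ k : Fin n, Lmat n q j k * B k m =
        (if k = ⟨0, j.pos⟩ then -q j * B ⟨0, j.pos⟩ m else 0) := by
      intro k
      rcases k with ⟨kv, hk⟩
      simp only [Lmat, Matrix.of_apply, Fin.mk.injEq]
      split_ifs <;> subst_vars <;> first | ring1 | (exfalso; omega)
    rw [Finset.sum_congr rfl (fun k _ => key k), Finset.sum_ite_eq',
        if_pos (Finset.mem_univ _)]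
    ring

lemma L_pow_mul_G (n : ℕ) (q : Fin n → ℝ) :
    ∀ (i : ℕ), i ≤ n → ∀ (j m : Fin n),
    ((Lmat n q) ^ i * Gmat n q) j m =
      if (j:ℕ) + i < n ∧ (m:ℕ) + i < n then qext n q ((j:ℤ) + (m:ℤ) + 1 - (n:ℤ) + (i:ℤ))
      else if n ≤ (j:ℕ) + i ∧ n ≤ (m:ℕ) + i then -qext n q ((j:ℤ) + (m:ℤ) + 1 - (n:ℤ) + (i:ℤ))
      else 0 := by
  intro i
  induction i with
  | zero =>
    intro _ j m
    have hj := j.isLt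
    have hm := m.isLt
    rw [pow_zero, one_mul, if_pos ⟨by omega, by omega⟩]
    simp [Gmat]
  | succ i ih =>
    intro hi j m
    have hj := j.isLt
    have hm := m.isLt
    rw [pow_succ', Matrix.mul_assoc, mul_apply_L]
    have hB0 : ((Lmat n q) ^ i * Gmat n q) ⟨0, j.pos⟩ m
        = if (m:ℕ) + i + 1 = n then 1 else 0 := by
      rw [ih (by omega) ⟨0, j.pos⟩ m]
      simp only [Fin.val_mk, Nat.cast_zero, Nat.cast_ofNat]
      by_cases hm1 : (m:ℕ) + i + 1 = n
      · rw [if_pos (by omega), if_pos hm1,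
          qext_one n q (by push_cast; omega)]
      · by_cases hm2 : (m:ℕ) + i < n
        · rw [if_pos (by omega), if_neg hm1,
            qext_eq_zero n q (by push_cast; omega)]
        · rw [if_neg (by omega), if_neg (by omega), if_neg hm1]
    rw [hB0]
    by_cases hjn : (j:ℕ) + 1 < n
    · rw [dif_pos hjn, ih (by omega) ⟨(j:ℕ)+1, hjn⟩ m]
      simp only [Fin.val_mk]
      push_cast
      have harg : ((j:ℤ) + 1 + (m:ℤ) + 1 - (n:ℤ) + (i:ℤ))
          = ((j:ℤ) + (m:ℤ) + 1 - (n:ℤ) + ((i:ℤ) + 1)) := by ring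
      rw [harg]
      by_cases hm1 : (m:ℕ) + i + 1 = n
      · rw [if_pos hm1]
        have hq : qext n q ((j:ℤ) + (m:ℤ) + 1 - (n:ℤ) + ((i:ℤ) + 1)) = q j :=
          qext_eq n q j (by omega)
        rw [hq]
        split_ifs <;> first | ring1 | (exfalso; omega)
      · rw [if_neg hm1]
        by_cases hm2 : (m:ℕ) + i < n
        · split_ifs <;> first | ring1 | (exfalso; omega)
        · split_ifs <;> first | ring1 | (exfalso; omega)
    · rw [dif_neg hjn]
      push_cast
      by_cases hm1 : (m:ℕ) + i + 1 = n
      · have hq : qext n q ((j:ℤ) + (m:ℤ) + 1 - (n:ℤ) + ((i:ℤ) + 1)) = q j :=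
          qext_eq n q j (by omega)
        rw [if_pos hm1, hq]
        split_ifs <;> first | (rw [hq]; ring1) | ring1 | (exfalso; omega)
      · rw [if_neg hm1]
        by_cases hc : (m:ℕ) + (i+1) < n
        · split_ifs <;> first | ring1 | (exfalso; omega)
        · have hz : qext n q ((j:ℤ) + (m:ℤ) + 1 - (n:ℤ) + ((i:ℤ) + 1)) = 0 :=
            qext_eq_zero n q (by omega)
          split_ifs <;> first | (rw [hz]; ring1) | ring1 | (exfalso; omega)

lemma L_pow_succ_mul_G (n : ℕ) (q : Fin n → ℝ) (l m : Fin n) :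
    ((Lmat n q) ^ (n + 1) * Gmat n q) l m
      = q l * q m - qext n q ((l:ℤ) + (m:ℤ) + 2) := by
  have hl := l.isLt
  have hm := m.isLt
  rw [pow_succ', Matrix.mul_assoc, mul_apply_L]
  have h0 : ((Lmat n q) ^ n * Gmat n q) ⟨0, l.pos⟩ m = -q m := by
    rw [L_pow_mul_G n q n le_rfl ⟨0, l.pos⟩ m,
      if_neg (by (try simp only [Fin.val_mk]); omega), if_pos ⟨by (try simp only [Fin.val_mk]); omega, by (try simp only [Fin.val_mk]); omega⟩]
    simp only [Fin.val_mk, Nat.cast_zero]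
    rw [qext_eq n q m (by push_cast; ring)]
  rw [h0]
  by_cases hln : (l:ℕ) + 1 < n
  · rw [dif_pos hln, L_pow_mul_G n q n le_rfl ⟨(l:ℕ)+1, hln⟩ m,
      if_neg (by (try simp only [Fin.val_mk]); omega), if_pos ⟨by (try simp only [Fin.val_mk]); omega, by (try simp only [Fin.val_mk]); omega⟩]
    simp only [Fin.val_mk]
    push_cast
    have harg : ((l:ℤ) + 1 + (m:ℤ) + 1 - (n:ℤ) + (n:ℤ)) = ((l:ℤ) + (m:ℤ) + 2) := by ring
    rw [harg]
    ring
  · rw [dif_neg hln,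
      qext_eq_zero n q (a := (l:ℤ) + (m:ℤ) + 2) (by omega)]
    ring


/-- the explicit formula
`E_{n+1,1}(q,p) = (1/2) Σ_{i,j=1}^{n} (q^i q^j − q^{i+j}) p_i p_j`,
where `q^k := 0` for `k > n`. -/
theorem Efun_np1_one_explicit (n : ℕ) (hn : 2 ≤ n) (x : Phase n) :
    Efun n (n + 1) 1 x =
      (1 / 2) * ∑ l : Fin n, ∑ m : Fin n,
        (x.1 l * x.1 m - qext n x.1 ((l : ℤ) + (m : ℤ) + 2)) * x.2 l * x.2 m := by
  have hK : Kmat n x.1 1 = 1 := by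
    simp [Kmat, Finset.sum_range_one, qext_one n x.1 rfl]
  simp only [Efun]
  rw [hK, one_mul]
  congr 1
  refine Finset.sum_congr rfl fun l _ => Finset.sum_congr rfl fun m _ => ?_
  rw [L_pow_succ_mul_G n x.1 l m]
end
end

section
/- For every integer n ≥ 2, every j ∈ {1,...,n}, and every integer m with j−n ≤ m ≤ j−1, the basic separable potential V_1^{(m)} is independent of the coordinate q^j, i.e. ∂V_1^{(m)}/∂q^j = 0 (identically on ℝ^n for m ≥ 0, and on the open set {q^n ≠ 0} for m < 0). -/
open Matrix

noncomputable section

/-- Basic separable potentials `V_r^{(m)}` for `m ≥ 0` (first argument is `m`,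
second is the 1-based index `r`): `V_r^{(0)} = 0`, `V_r^{(1)} = -q^r`,
`V_r^{(m+1)} = V_{r+1}^{(m)} + V_r^{(1)} V_1^{(m)}`. -/
def Vpos (n : ℕ) (q : Fin n → ℝ) : ℕ → ℕ → ℝ
  | 0, _ => 0
  | 1, r => -qext n q (r : ℤ)
  | (m + 2), r => Vpos n q (m + 1) (r + 1) + (-qext n q (r : ℤ)) * Vpos n q (m + 1) 1

/-- Basic separable potentials `V_r^{(-m)}` (first argument is `m ≥ 0`, second the
1-based index `r`, with the convention `V_0^{(-m)} = 0`): `V_r^{(-1)} = -q^{r-1}/q^n`,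
`V_r^{(-m-1)} = V_{r-1}^{(-m)} + V_r^{(-1)} V_n^{(-m)}`. -/
def Vneg (n : ℕ) (q : Fin n → ℝ) : ℕ → ℕ → ℝ
  | 0, _ => 0
  | 1, r => if r = 0 then 0 else -qext n q ((r : ℤ) - 1) / qext n q (n : ℤ)
  | (m + 2), r => if r = 0 then 0 else
      Vneg n q (m + 1) (r - 1) + (-qext n q ((r : ℤ) - 1) / qext n q (n : ℤ)) * Vneg n q (m + 1) n

/-- `V_r^{(k)}` for arbitrary integer `k`. -/
def Vk (n : ℕ) (q : Fin n → ℝ) (k : ℤ) (r : ℕ) : ℝ :=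
  if 0 ≤ k then Vpos n q k.toNat r else Vneg n q (-k).toNat r

/-- `H_{i,r}^{(k)} = E_{i,r} + V_r^{(k)}`. -/
def Hfun (n i r : ℕ) (k : ℤ) : Phase n → ℝ := fun x => Efun n i r x + Vk n x.1 k r

namespace V1aux

def Dz {n : ℕ} (v q : Fin n → ℝ) (f : (Fin n → ℝ) → ℝ) : Prop :=
  DifferentiableAt ℝ f q ∧ fderiv ℝ f q v = 0

variable {n : ℕ} {v q : Fin n → ℝ}

lemma dz_const (c : ℝ) : Dz v q (fun _ => c) :=
  ⟨differentiableAt_const c, by simp⟩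

lemma dz_add {f g} (hf : Dz v q f) (hg : Dz v q g) : Dz v q (fun x => f x + g x) :=
  ⟨hf.1.add hg.1, by rw [fderiv_fun_add hf.1 hg.1]; simp [hf.2, hg.2]⟩

lemma dz_neg {f} (hf : Dz v q f) : Dz v q (fun x => -f x) :=
  ⟨hf.1.neg, by rw [fderiv_fun_neg]; simp [hf.2]⟩

lemma dz_mul {f g} (hf : Dz v q f) (hg : Dz v q g) : Dz v q (fun x => f x * g x) :=
  ⟨hf.1.mul hg.1, by rw [fderiv_fun_mul hf.1 hg.1]; simp [hf.2, hg.2]⟩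

lemma dz_inv {f} (hf : Dz v q f) (h0 : f q ≠ 0) : Dz v q (fun x => (f x)⁻¹) := by
  refine ⟨hf.1.inv h0, ?_⟩
  have : (fun x => (f x)⁻¹) = Inv.inv ∘ f := rfl
  rw [this, fderiv_comp q (differentiableAt_inv h0) hf.1]
  simp [hf.2]

lemma dz_div {f g} (hf : Dz v q f) (hg : Dz v q g) (h0 : g q ≠ 0) :
    Dz v q (fun x => f x / g x) := by
  have : (fun x => f x / g x) = fun x => f x * (g x)⁻¹ := by
    funext x; rw [div_eq_mul_inv]
  rw [this]; exact dz_mul hf (dz_inv hg h0)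

lemma dz_coord {i i' : Fin n} (h : i ≠ i') :
    Dz (Pi.single i' 1) q (fun x => x i) := by
  have hd : HasFDerivAt (fun x : Fin n → ℝ => x i)
      (ContinuousLinearMap.proj i : (Fin n → ℝ) →L[ℝ] ℝ) q :=
    ((ContinuousLinearMap.proj i : (Fin n → ℝ) →L[ℝ] ℝ)).hasFDerivAt
  refine ⟨hd.differentiableAt, ?_⟩
  rw [hd.fderiv]
  simp [Pi.single_eq_of_ne h]

section

variable {j : ℕ} (hj1 : 1 ≤ j) (hjn : j ≤ n)

lemma dz_qext (k : ℤ) (hk : k ≠ (j : ℤ)) :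
    Dz (Pi.single (⟨j - 1, by omega⟩ : Fin n) 1) q (fun q' => qext n q' k) := by
  by_cases h : 1 ≤ k ∧ k ≤ (n : ℤ)
  · have he : (fun q' : Fin n → ℝ => qext n q' k)
        = fun q' => q' ⟨k.toNat - 1, by omega⟩ := by
      funext q'; simp [qext, h]
    rw [he]
    refine dz_coord ?_
    intro hcontra
    rw [Fin.mk.injEq] at hcontra
    omega
  · have he : (fun q' : Fin n → ℝ => qext n q' k)
        = fun _ => if k = 0 then (1:ℝ) else 0 := by
      funext q'; simp [qext, h]
    rw [he]; exact dz_const _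

lemma dz_vpos (m r : ℕ) (h : m + r ≤ j) :
    Dz (Pi.single (⟨j - 1, by omega⟩ : Fin n) 1) q (fun q' => Vpos n q' m r) := by
  induction m generalizing r with
  | zero => simpa only [Vpos] using dz_const (0:ℝ)
  | succ m ih =>
    cases m with
    | zero =>
      simp only [Vpos]
      exact dz_neg (dz_qext hj1 hjn (r : ℤ) (by omega))
    | succ m =>
      simp only [Vpos]
      exact dz_add (ih (r + 1) (by omega))
        (dz_mul (dz_neg (dz_qext hj1 hjn (r : ℤ) (by omega))) (ih 1 (by omega)))

lemma qext_n_val (hn : 1 ≤ n) : qext n q (n : ℤ) = q ⟨n - 1, by omega⟩ := by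
  have h : 1 ≤ (n:ℤ) ∧ (n:ℤ) ≤ (n:ℤ) := by omega
  simp only [qext, dif_pos h]
  congr 1

include hj1 hjn in
lemma dz_vneg (hn : 1 ≤ n) (h0 : q ⟨n - 1, by omega⟩ ≠ 0) (m r : ℕ) (hr : r ≤ n)
    (hc : (j : ℤ) ≤ (r : ℤ) - m - 1 ∨ ((r : ℤ) ≤ j ∧ (j : ℤ) ≤ (n : ℤ) - m)) :
    Dz (Pi.single (⟨j - 1, by omega⟩ : Fin n) 1) q (fun q' => Vneg n q' m r) := by
  have hq0 : qext n q (n : ℤ) ≠ 0 := by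
    have h : 1 ≤ (n:ℤ) ∧ (n:ℤ) ≤ (n:ℤ) := by omega
    simp only [qext, dif_pos h]
    exact h0
  induction m generalizing r with
  | zero => simpa only [Vneg] using dz_const (0:ℝ)
  | succ m ih =>
    rcases Nat.eq_zero_or_pos r with hr0 | hr0
    · subst hr0
      cases m with
      | zero => simpa only [Vneg, if_pos rfl, ↓reduceIte] using dz_const (0:ℝ)
      | succ m => simpa only [Vneg, if_pos rfl, ↓reduceIte] using dz_const (0:ℝ)
    · have hrne : r ≠ 0 := by omega
      cases m with
      | zero =>
        have he : (fun q' : Fin n → ℝ => Vneg n q' 1 r)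
            = fun q' => -qext n q' ((r : ℤ) - 1) / qext n q' (n : ℤ) := by
          funext q'; simp only [Vneg, if_neg hrne]
        rw [he]
        exact dz_div (dz_neg (dz_qext hj1 hjn _ (by omega)))
          (dz_qext hj1 hjn _ (by omega)) hq0
      | succ m =>
        have he : (fun q' : Fin n → ℝ => Vneg n q' (m + 2) r)
            = fun q' => Vneg n q' (m + 1) (r - 1)
              + (-qext n q' ((r : ℤ) - 1) / qext n q' (n : ℤ)) * Vneg n q' (m + 1) n := by
          funext q'; simp only [Vneg, if_neg hrne]
        rw [he]
        have hcast : ((r - 1 : ℕ) : ℤ) = (r : ℤ) - 1 := by omega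
        refine dz_add (ih (r - 1) (by omega) ?_)
          (dz_mul (dz_div (dz_neg (dz_qext hj1 hjn _ (by omega)))
            (dz_qext hj1 hjn _ (by omega)) hq0) (ih n le_rfl ?_))
        · rw [hcast]; omega
        · left; omega
end

end V1aux

/-- for `j ∈ {1,…,n}` and any integer `m` with `j−n ≤ m ≤ j−1`, the basic
separable potential `V_1^{(m)}` is independent of `q^j`: `∂V_1^{(m)}/∂q^j = 0`,
identically on `ℝ^n` for `m ≥ 0` and on the open set `{q^n ≠ 0}` for `m < 0`. -/
theorem V1_independent_of_qj (n : ℕ) (hn : 2 ≤ n) (j : ℕ) (hj1 : 1 ≤ j) (hjn : j ≤ n)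
    (m : ℤ) (hm1 : (j : ℤ) - n ≤ m) (hm2 : m ≤ (j : ℤ) - 1)
    (q : Fin n → ℝ) (hq : 0 ≤ m ∨ q ⟨n - 1, by omega⟩ ≠ 0) :
    fderiv ℝ (fun q' => Vk n q' m 1) q (Pi.single ⟨j - 1, by omega⟩ 1) = 0 := by
  have hnn : 1 ≤ n := by omega
  rcases le_or_gt 0 m with hm | hm
  · have he : (fun q' => Vk n q' m 1) = fun q' => Vpos n q' m.toNat 1 := by
      funext q'; simp [Vk, hm]
    rw [he]
    exact (V1aux.dz_vpos hj1 hjn m.toNat 1 (by omega)).2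
  · have hq' : q ⟨n - 1, by omega⟩ ≠ 0 := by
      rcases hq with h | h
      · omega
      · exact h
    have he : (fun q' => Vk n q' m 1) = fun q' => Vneg n q' (-m).toNat 1 := by
      funext q'; simp [Vk, not_le.mpr hm]
    rw [he]
    exact (V1aux.dz_vneg hj1 hjn hnn hq' (-m).toNat 1 hnn
      (by right; constructor <;> omega)).2
end
end
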